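/- The LF-mapping is a bijection of Fin n. -/

import Mathlib

/-- Length of the longest common prefix of two lists. -/
def lcpLen {α : Type*} [DecidableEq α] : List α → List α → ℕ
  | a :: u, b :: v => if a = b then lcpLen u v + 1 else 0
  | _, _ => 0

/-- The suffix of `S` starting at position `i` (as a list). -/
def sfx {α : Type*} {n : ℕ} (S : Fin n → α) (i : ℕ) : List α :=
  (List.ofFn S).drop i
/-- Burrows–Wheeler transform: `BWT[i] = S[SUF[i]-1]` if `SUF[i] ≠ 0`,
    and the sentinel `S[n-1]` otherwise. -/
def bwtOf {α : Type*} {n : ℕ} (hn : 0 < n) (S : Fin n → α)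
    (SUF : Equiv.Perm (Fin n)) (i : Fin n) : α :=
  if (SUF i : ℕ) = 0 then S ⟨n - 1, by omega⟩
  else S ⟨(SUF i : ℕ) - 1, lt_of_le_of_lt (Nat.sub_le _ _) (Fin.isLt _)⟩

/-- LF-mapping: `LF[i] = ISA[SUF[i]-1]` if `SUF[i] ≠ 0`, and `0` otherwise. -/
def lfOf {n : ℕ} (hn : 0 < n) (SUF : Equiv.Perm (Fin n)) (i : Fin n) : Fin n :=
  if (SUF i : ℕ) = 0 then ⟨0, hn⟩
  else SUF.symm ⟨(SUF i : ℕ) - 1, lt_of_le_of_lt (Nat.sub_le _ _) (Fin.isLt _)⟩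

/-- The LF-mapping is a bijection of `Fin n`. -/
theorem lf_bijective {α : Type*} [LinearOrder α] {n : ℕ} (hn : 0 < n)
    (S : Fin n → α)
    (hsent : ∀ k : Fin n, (k : ℕ) < n - 1 → S ⟨n - 1, by omega⟩ < S k)
    (SUF : Equiv.Perm (Fin n))
    (hSUF : ∀ i j : Fin n, i < j →
      List.Lex (· < ·) (sfx S ((SUF i : Fin n) : ℕ)) (sfx S ((SUF j : Fin n) : ℕ))) :
    Function.Bijective (lfOf hn SUF) := by
  -- sfx unfolds as cons
  have hsfx : ∀ k : ℕ, (hk : k < n) → sfx S k = S ⟨k, hk⟩ :: sfx S (k + 1) := by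
    intro k hk
    have hlen : k < (List.ofFn S).length := by simpa using hk
    simp [sfx, List.drop_eq_getElem_cons hlen]
  -- SUF 0 = n - 1
  have hkey : (SUF ⟨0, hn⟩ : ℕ) = n - 1 := by
    by_contra hne
    have hlt : (SUF ⟨0, hn⟩ : ℕ) < n - 1 := by
      have := (SUF ⟨0, hn⟩).isLt; omega
    set j : Fin n := SUF.symm ⟨n - 1, by omega⟩ with hj
    have hSj : (SUF j : ℕ) = n - 1 := by simp [hj]
    have hj0 : (⟨0, hn⟩ : Fin n) < j := by
      rcases Nat.eq_zero_or_pos (j : ℕ) with h0 | h0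
      · exfalso; apply hne
        have : j = ⟨0, hn⟩ := Fin.ext h0
        rw [this] at hSj; exact hSj
      · exact h0
    have hlex := hSUF ⟨0, hn⟩ j hj0
    rw [hSj, hsfx (n - 1) (by omega), hsfx _ (SUF ⟨0, hn⟩).isLt] at hlex
    have hnil : sfx S (n - 1 + 1) = [] := by
      simp [sfx, List.drop_eq_nil_iff]; omega
    rw [hnil] at hlex
    have hs := hsent (SUF ⟨0, hn⟩) hlt
    generalize hA : S ⟨n - 1, by omega⟩ = A at hlex hs
    generalize hB : S ⟨(SUF ⟨0, hn⟩ : ℕ), (SUF ⟨0, hn⟩).isLt⟩ = B at hlex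
    have hB' : S (SUF ⟨0, hn⟩) = B := by rw [← hB]
    rw [hB'] at hs
    cases hlex with
    | cons h => exact List.not_lex_nil h
    | rel h => exact absurd h (not_lt.2 (le_of_lt hs))
  rw [Fintype.bijective_iff_injective_and_card]
  refine ⟨fun i j hij => ?_, rfl⟩
  unfold lfOf at hij
  by_cases hi : (SUF i : ℕ) = 0 <;> by_cases hj : (SUF j : ℕ) = 0
  · apply SUF.injective; exact Fin.ext (hi.trans hj.symm)
  · exfalso
    rw [if_pos hi, if_neg hj] at hij
    have h2 := congrArg (fun t => ((SUF t : Fin n) : ℕ)) hij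
    simp only [Equiv.apply_symm_apply, hkey] at h2
    have := (SUF j).isLt
    omega
  · exfalso
    rw [if_neg hi, if_pos hj] at hij
    have h2 := congrArg (fun t => ((SUF t : Fin n) : ℕ)) hij
    simp only [Equiv.apply_symm_apply, hkey] at h2
    have := (SUF i).isLt
    omega
  · rw [if_neg hi, if_neg hj] at hij
    have := SUF.symm.injective hij
    have h2 := congrArg Fin.val this
    simp only at h2
    apply SUF.injective
    apply Fin.ext
    omega
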